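/- Let f : ℝ → ℝ be integrable with ∫_ℝ f = 0 and x ↦ |x| f(x) integrable. Then Φ_f has finite limits at ±∞, given by lim_{x→+∞} Φ_f(x) = 4π ∫_0^∞ y f(y) dy and lim_{x→−∞} Φ_f(x) = −4π ∫_{−∞}^0 y f(y) dy; in particular the dipolar moment Φ_f(+∞) − Φ_f(−∞) equals 4π ∫_ℝ y f(y) dy. -/

import Mathlib

open MeasureTheory Real Filter Topology

/-- The primitive `W_f(x) = ∫_{-∞}^x f(y) dy`. -/
noncomputable def W (f : ℝ → ℝ) (x : ℝ) : ℝ := ∫ y in Set.Iic x, f y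

/-- The mean-field potential `Φ_f(x) = -4π ∫_0^x W_f(y) dy`. -/
noncomputable def Phi (f : ℝ → ℝ) (x : ℝ) : ℝ := -4 * π * ∫ y in (0:ℝ)..x, W f y

lemma fub (f : ℝ → ℝ) (hf : Integrable f) (a b : ℝ) :
    ∫ y in Set.Ioc a b, W f y
      = ∫ t, (volume (Set.Ioc a b ∩ Set.Ici t)).toReal * f t := by
  set μ : Measure ℝ := volume.restrict (Set.Ioc a b) with hμ
  have hfin : IsFiniteMeasure μ :=
    ⟨by rw [hμ, Measure.restrict_apply_univ]; exact measure_Ioc_lt_top⟩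
  set F : ℝ × ℝ → ℝ := fun p => ({q : ℝ × ℝ | q.2 ≤ q.1}).indicator (fun q => f q.2) p with hF
  have hFm : AEStronglyMeasurable F (μ.prod volume) :=
    (hf.1.comp_snd).indicator (measurableSet_le measurable_snd measurable_fst)
  have hFy : ∀ y t : ℝ, F (y, t) = (Set.Ici t).indicator (fun _ => f t) y := by
    intro y t
    by_cases h : t ≤ y <;> simp [hF, Set.indicator_apply, h]
  have hFi : Integrable F (μ.prod volume) := by
    rw [integrable_prod_iff' hFm]
    constructor
    · refine Filter.Eventually.of_forall fun t => ?_
      have : (fun y => F (y, t)) = (Set.Ici t).indicator (fun _ => f t) := by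
        funext y; exact hFy y t
      rw [this]
      exact (integrable_const (f t)).indicator measurableSet_Ici
    · refine (hf.norm.const_mul (μ Set.univ).toReal).mono'
        hFm.norm.prod_swap.integral_prod_right' ?_
      refine Filter.Eventually.of_forall fun t => ?_
      have h1 : ∀ y : ℝ, ‖F (y, t)‖ ≤ ‖f t‖ := by
        intro y; rw [hFy]
        by_cases h : y ∈ Set.Ici t <;> simp [Set.indicator_apply, h]
      calc ‖∫ y, ‖F (y, t)‖ ∂μ‖ ≤ ∫ y, ‖f t‖ ∂μ := by
            rw [Real.norm_eq_abs, abs_of_nonneg (integral_nonneg fun y => norm_nonneg _)]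
            exact integral_mono_of_nonneg (Filter.Eventually.of_forall fun y => norm_nonneg _)
              (integrable_const _) (Filter.Eventually.of_forall h1)
        _ = (μ Set.univ).toReal * ‖f t‖ := by
            rw [integral_const, smul_eq_mul]; rfl
  have swap := integral_integral_swap (f := fun y t => F (y, t)) (μ := μ) (ν := volume) hFi
  have lhs : ∀ y : ℝ, ∫ t, F (y, t) = W f y := by
    intro y
    have : (fun t => F (y, t)) = (Set.Iic y).indicator f := by
      funext t
      by_cases h : t ≤ y <;> simp [hF, Set.indicator_apply, h]
    rw [this, integral_indicator measurableSet_Iic]; rfl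
  have rhs : ∀ t : ℝ, ∫ y, F (y, t) ∂μ
      = (volume (Set.Ioc a b ∩ Set.Ici t)).toReal * f t := by
    intro t
    have : (fun y => F (y, t)) = (Set.Ici t).indicator (fun _ => f t) := by
      funext y; exact hFy y t
    rw [this, integral_indicator_const _ measurableSet_Ici, hμ, Measure.real,
      Measure.restrict_apply measurableSet_Ici, Set.inter_comm, smul_eq_mul]
  calc ∫ y in Set.Ioc a b, W f y = ∫ y, W f y ∂μ := rfl
    _ = ∫ y, ∫ t, F (y, t) ∂volume ∂μ := by
        refine integral_congr_ae (Filter.Eventually.of_forall fun y => ?_)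
        exact (lhs y).symm
    _ = ∫ t, ∫ y, F (y, t) ∂μ ∂volume := swap
    _ = ∫ t, (volume (Set.Ioc a b ∩ Set.Ici t)).toReal * f t := by
        refine integral_congr_ae (Filter.Eventually.of_forall fun t => ?_)
        exact rhs t

lemma htf_int (f : ℝ → ℝ) (hf : Integrable f) (hm : Integrable (fun x => |x| * f x)) :
    Integrable (fun t => t * f t) := by
  refine hm.abs.mono' (aestronglyMeasurable_id.mul hf.1) ?_
  filter_upwards with t
  simp [abs_mul, abs_abs, le_refl]

lemma key_pos (f : ℝ → ℝ) (hf : Integrable f) (hm : Integrable (fun x => |x| * f x))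
    (x : ℝ) (hx : 0 ≤ x) :
    ∫ y in (0:ℝ)..x, W f y = x * W f x - ∫ t in Set.Ioc 0 x, t * f t := by
  have htf := htf_int f hf hm
  rw [intervalIntegral.integral_of_le hx, fub f hf 0 x]
  have hker : ∀ t, (volume (Set.Ioc 0 x ∩ Set.Ici t)).toReal * f t
      = x * (Set.Iic x).indicator f t - (Set.Ioc 0 x).indicator (fun s => s * f s) t := by
    intro t
    rcases le_or_gt t 0 with h | h
    · have h1 : Set.Ioc 0 x ∩ Set.Ici t = Set.Ioc 0 x :=
        Set.inter_eq_left.mpr fun y hy => le_trans h (le_of_lt hy.1)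
      rw [h1, Real.volume_Ioc]
      simp only [Set.indicator_apply, Set.mem_Iic, Set.mem_Ioc]
      rw [if_pos (by linarith), if_neg (by rintro ⟨h1', h2'⟩; linarith),
        sub_zero, ENNReal.toReal_ofReal hx, sub_zero]
    · have h1 : Set.Ioc 0 x ∩ Set.Ici t = Set.Icc t x := by
        ext y
        simp only [Set.mem_inter_iff, Set.mem_Ioc, Set.mem_Ici, Set.mem_Icc]
        constructor
        · rintro ⟨⟨_, hyx⟩, hty⟩; exact ⟨hty, hyx⟩
        · rintro ⟨hty, hyx⟩; exact ⟨⟨lt_of_lt_of_le h hty, hyx⟩, hty⟩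
      rw [h1, Real.volume_Icc]
      simp only [Set.indicator_apply, Set.mem_Iic, Set.mem_Ioc]
      rcases le_or_gt t x with h2 | h2
      · rw [ENNReal.toReal_ofReal (by linarith), if_pos h2, if_pos ⟨h, h2⟩]
        ring
      · rw [ENNReal.ofReal_of_nonpos (by linarith), ENNReal.toReal_zero,
          if_neg (by linarith), if_neg (by rintro ⟨h1', h2'⟩; linarith)]
        ring
  calc ∫ t, (volume (Set.Ioc 0 x ∩ Set.Ici t)).toReal * f t
      = ∫ t, (x * (Set.Iic x).indicator f t - (Set.Ioc 0 x).indicator (fun s => s * f s) t) :=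
        integral_congr_ae (Filter.Eventually.of_forall hker)
    _ = x * W f x - ∫ t in Set.Ioc 0 x, t * f t := by
        rw [integral_sub ((hf.indicator measurableSet_Iic).const_mul x)
          (htf.indicator measurableSet_Ioc), integral_const_mul,
          integral_indicator measurableSet_Iic, integral_indicator measurableSet_Ioc]
        rfl

lemma key_neg (f : ℝ → ℝ) (hf : Integrable f) (hm : Integrable (fun x => |x| * f x))
    (x : ℝ) (hx : x ≤ 0) :
    ∫ y in (0:ℝ)..x, W f y = x * W f x + ∫ t in Set.Ioc x 0, t * f t := by
  have htf := htf_int f hf hm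
  rw [intervalIntegral.integral_symm, intervalIntegral.integral_of_le hx, fub f hf x 0]
  have hker : ∀ t, (volume (Set.Ioc x 0 ∩ Set.Ici t)).toReal * f t
      = (-x) * (Set.Iic x).indicator f t + (Set.Ioc x 0).indicator (fun s => -s * f s) t := by
    intro t
    rcases le_or_gt t x with h | h
    · have h1 : Set.Ioc x 0 ∩ Set.Ici t = Set.Ioc x 0 :=
        Set.inter_eq_left.mpr fun y hy => le_trans h (le_of_lt hy.1)
      rw [h1, Real.volume_Ioc]
      simp only [Set.indicator_apply, Set.mem_Iic, Set.mem_Ioc]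
      rw [if_pos h, if_neg (by rintro ⟨h1', h2'⟩; linarith), add_zero, zero_sub,
        ENNReal.toReal_ofReal (by linarith)]
    · have h1 : Set.Ioc x 0 ∩ Set.Ici t = Set.Icc t 0 := by
        ext y
        simp only [Set.mem_inter_iff, Set.mem_Ioc, Set.mem_Ici, Set.mem_Icc]
        constructor
        · rintro ⟨⟨_, hy0⟩, hty⟩; exact ⟨hty, hy0⟩
        · rintro ⟨hty, hy0⟩; exact ⟨⟨lt_of_lt_of_le h hty, hy0⟩, hty⟩
      rw [h1, Real.volume_Icc]
      simp only [Set.indicator_apply, Set.mem_Iic, Set.mem_Ioc]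
      rcases le_or_gt t 0 with h2 | h2
      · rw [ENNReal.toReal_ofReal (by linarith), if_neg (by linarith), if_pos ⟨h, h2⟩]
        ring
      · rw [ENNReal.ofReal_of_nonpos (by linarith), ENNReal.toReal_zero,
          if_neg (by linarith), if_neg (by rintro ⟨h1', h2'⟩; linarith)]
        ring
  have heq : ∫ t, (volume (Set.Ioc x 0 ∩ Set.Ici t)).toReal * f t
      = (-x) * W f x + ∫ t in Set.Ioc x 0, -t * f t := by
    calc ∫ t, (volume (Set.Ioc x 0 ∩ Set.Ici t)).toReal * f t
        = ∫ t, ((-x) * (Set.Iic x).indicator f t + (Set.Ioc x 0).indicator (fun s => -s * f s) t) :=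
          integral_congr_ae (Filter.Eventually.of_forall hker)
      _ = (-x) * W f x + ∫ t in Set.Ioc x 0, -t * f t := by
          rw [integral_add ((hf.indicator measurableSet_Iic).const_mul (-x))
            ((htf.neg.congr (Filter.Eventually.of_forall fun s => by simp)).indicator
              measurableSet_Ioc),
            integral_const_mul, integral_indicator measurableSet_Iic,
            integral_indicator measurableSet_Ioc]
          rfl
  have hneg : ∫ t in Set.Ioc x 0, -t * f t = -∫ t in Set.Ioc x 0, t * f t := by
    simp only [neg_mul]
    exact integral_neg _
  rw [heq, hneg]
  ring

/-- For neutral `f` with finite first moment, `Φ_f` has finite limits at `±∞`, and the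
dipolar moment `Φ_f(+∞) - Φ_f(-∞)` equals `4π ∫ y f(y) dy`. -/
theorem stmt5 (f : ℝ → ℝ) (hf : Integrable f) (h0 : ∫ x, f x = 0)
    (hm : Integrable (fun x => |x| * f x)) :
    Tendsto (Phi f) atTop (nhds (4 * π * ∫ y in Set.Ioi (0:ℝ), y * f y)) ∧
    Tendsto (Phi f) atBot (nhds (-4 * π * ∫ y in Set.Iio (0:ℝ), y * f y)) ∧
    (4 * π * ∫ y in Set.Ioi (0:ℝ), y * f y) - (-4 * π * ∫ y in Set.Iio (0:ℝ), y * f y)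
      = 4 * π * ∫ y, y * f y := by
  have htf := htf_int f hf hm
  have hg : Integrable (fun t => |t * f t|) := htf.abs
  have hsplit : ∀ x : ℝ, ∫ t in Set.Ioi x, |t * f t|
      = (∫ t, |t * f t|) - ∫ t in Set.Iic x, |t * f t| := by
    intro x
    have h2 := intervalIntegral.integral_Iic_add_Ioi (b := x)
      hg.integrableOn hg.integrableOn
    linarith
  have hsplitf : ∀ x : ℝ, W f x = -∫ t in Set.Ioi x, f t := by
    intro x
    have h2 := intervalIntegral.integral_Iic_add_Ioi (b := x)
      hf.integrableOn hf.integrableOn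
    rw [h0] at h2
    have : W f x = ∫ t in Set.Iic x, f t := rfl
    linarith
  -- tails
  have hIicTop : Tendsto (fun x : ℝ => ∫ t in Set.Iic x, |t * f t|) atTop
      (𝓝 (∫ t, |t * f t|)) :=
    (aecover_Iic tendsto_id).integral_tendsto_of_countably_generated hg
  have htailTop : Tendsto (fun x : ℝ => ∫ t in Set.Ioi x, |t * f t|) atTop (𝓝 0) := by
    have h1 := tendsto_const_nhds (x := ∫ t, |t * f t|) (f := atTop (α := ℝ)) |>.sub hIicTop
    rw [sub_self] at h1
    exact h1.congr fun x => (hsplit x).symm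
  have hIoiBot : Tendsto (fun x : ℝ => ∫ t in Set.Ioi x, |t * f t|) atBot
      (𝓝 (∫ t, |t * f t|)) :=
    (aecover_Ioi tendsto_id).integral_tendsto_of_countably_generated hg
  have htailBot : Tendsto (fun x : ℝ => ∫ t in Set.Iic x, |t * f t|) atBot (𝓝 0) := by
    have h1 := tendsto_const_nhds (x := ∫ t, |t * f t|) (f := atBot (α := ℝ)) |>.sub hIoiBot
    rw [sub_self] at h1
    refine h1.congr fun x => ?_
    have := hsplit x
    linarith
  -- x * W f x → 0 at ±∞
  have hW0Top : Tendsto (fun x : ℝ => x * W f x) atTop (𝓝 0) := by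
    rw [tendsto_zero_iff_norm_tendsto_zero]
    refine squeeze_zero' (Filter.Eventually.of_forall fun x => norm_nonneg _) ?_ htailTop
    filter_upwards [eventually_ge_atTop (0:ℝ)] with x hx
    have hxw : x * W f x = -∫ t in Set.Ioi x, x * f t := by
      rw [hsplitf x, integral_const_mul]; ring
    calc ‖x * W f x‖ = ‖∫ t in Set.Ioi x, x * f t‖ := by rw [hxw, norm_neg]
      _ ≤ ∫ t in Set.Ioi x, ‖x * f t‖ := norm_integral_le_integral_norm _
      _ ≤ ∫ t in Set.Ioi x, |t * f t| := by
          simp only [Real.norm_eq_abs]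
          refine setIntegral_mono_on (hf.const_mul x).abs.integrableOn
            hg.integrableOn measurableSet_Ioi fun t ht => ?_
          rw [abs_mul, abs_mul]
          refine mul_le_mul_of_nonneg_right ?_ (abs_nonneg _)
          rw [abs_of_nonneg hx, abs_of_nonneg (hx.trans ht.le)]
          exact ht.le
  have hW0Bot : Tendsto (fun x : ℝ => x * W f x) atBot (𝓝 0) := by
    rw [tendsto_zero_iff_norm_tendsto_zero]
    refine squeeze_zero' (Filter.Eventually.of_forall fun x => norm_nonneg _) ?_ htailBot
    filter_upwards [eventually_le_atBot (0:ℝ)] with x hx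
    have hxw : x * W f x = ∫ t in Set.Iic x, x * f t := by
      rw [integral_const_mul]; rfl
    calc ‖x * W f x‖ = ‖∫ t in Set.Iic x, x * f t‖ := by rw [hxw]
      _ ≤ ∫ t in Set.Iic x, ‖x * f t‖ := norm_integral_le_integral_norm _
      _ ≤ ∫ t in Set.Iic x, |t * f t| := by
          simp only [Real.norm_eq_abs]
          refine setIntegral_mono_on (hf.const_mul x).abs.integrableOn
            hg.integrableOn measurableSet_Iic fun t ht => ?_
          rw [abs_mul, abs_mul]
          refine mul_le_mul_of_nonneg_right ?_ (abs_nonneg _)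
          rw [abs_of_nonpos hx, abs_of_nonpos (ht.trans hx)]
          exact neg_le_neg ht
  -- moment convergences
  have hA : Tendsto (fun x : ℝ => ∫ t in Set.Ioc 0 x, t * f t) atTop
      (𝓝 (∫ t in Set.Ioi 0, t * f t)) := by
    refine (intervalIntegral_tendsto_integral_Ioi 0 htf.integrableOn tendsto_id).congr' ?_
    filter_upwards [eventually_ge_atTop (0:ℝ)] with x hx
    simp only [id_eq]
    rw [intervalIntegral.integral_of_le hx]
  have hB : Tendsto (fun x : ℝ => ∫ t in Set.Ioc x 0, t * f t) atBot
      (𝓝 (∫ t in Set.Iio 0, t * f t)) := by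
    have h1 := intervalIntegral_tendsto_integral_Iic 0 htf.integrableOn tendsto_id
    rw [integral_Iic_eq_integral_Iio] at h1
    refine h1.congr' ?_
    filter_upwards [eventually_le_atBot (0:ℝ)] with x hx
    simp only [id_eq]
    rw [intervalIntegral.integral_of_le hx]
  -- assemble
  refine ⟨?_, ?_, ?_⟩
  · have h1 := (hW0Top.sub hA).const_mul (-4 * π)
    rw [show (-4 * π) * (0 - ∫ t in Set.Ioi 0, t * f t)
        = 4 * π * ∫ t in Set.Ioi (0:ℝ), t * f t by ring] at h1
    refine h1.congr' ?_
    filter_upwards [eventually_ge_atTop (0:ℝ)] with x hx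
    rw [Phi, key_pos f hf hm x hx]
  · have h1 := (hW0Bot.add hB).const_mul (-4 * π)
    rw [show (-4 * π) * (0 + ∫ t in Set.Iio 0, t * f t)
        = -4 * π * ∫ t in Set.Iio (0:ℝ), t * f t by ring] at h1
    refine h1.congr' ?_
    filter_upwards [eventually_le_atBot (0:ℝ)] with x hx
    rw [Phi, key_neg f hf hm x hx]
  · have hsum : (∫ t in Set.Iio (0:ℝ), t * f t) + (∫ t in Set.Ioi (0:ℝ), t * f t)
        = ∫ t, t * f t := by
      rw [← integral_Iic_eq_integral_Iio]
      exact intervalIntegral.integral_Iic_add_Ioi htf.integrableOn htf.integrableOn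
    calc (4 * π * ∫ y in Set.Ioi (0:ℝ), y * f y) - (-4 * π * ∫ y in Set.Iio (0:ℝ), y * f y)
        = 4 * π * ((∫ y in Set.Iio (0:ℝ), y * f y) + ∫ y in Set.Ioi (0:ℝ), y * f y) := by ring
      _ = 4 * π * ∫ y, y * f y := by rw [hsum]
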